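/- Let m, r, n ∈ ℕ and let (A,B,C) with A ∈ ℝ^{n×n}, B ∈ ℝ^{n×m}, C ∈ ℝ^{m×n} have strict relative degree r, be minimum phase, and have positive definite Γ := C A^{r−1} B (i.e., (A,B,C) ∈ Σ_{m,r}). Let α ∈ ℝ[s] be a monic polynomial of degree p such that for every root λ ∈ ℂ of α the matrix [[A − λI, B],[C, 0]] has rank n+m. Let β ∈ ℝ[s] be a monic Hurwitz polynomial of degree p coprime to α, and let Â ∈ ℝ^{p×p}, b̂ ∈ ℝ^p, ĉ ∈ ℝ^{1×p} be a minimal realization of β/α, i.e., (Â, b̂) is controllable, (ĉ, Â) is observable, and ĉ (λI − Â)^{−1} b̂ + 1 = β(λ)/α(λ) for all λ ∈ ℂ outside the spectrum of Â. Set Ã = diag(Â,…,Â) ∈ ℝ^{mp×mp} (m diagonal blocks), B̃ = diag(b̂,…,b̂) ∈ ℝ^{mp×m}, C̃ = diag(ĉ,…,ĉ) ∈ ℝ^{m×mp}, and define the interconnection A_ic = [[A, B C̃],[0, Ã]], B_ic = [B; B̃], C_ic = [C, 0]. Then (A_ic, B_ic, C_ic) has strict relative degree r, is minimum phase, Γ_ic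 := C_ic A_ic^{r−1} B_ic equals Γ (hence is positive definite); i.e., (A_ic, B_ic, C_ic) ∈ Σ_{m,r}. -/

import Mathlib

open Matrix Polynomial

noncomputable section

/-- The Rosenbrock matrix `[[A − λI, B],[C, 0]]` of a square linear system, over `ℂ`. -/
def Rosenbrock {N : Type*} [Fintype N] [DecidableEq N] {m : ℕ}
    (A : Matrix N N ℝ) (B : Matrix N (Fin m) ℝ) (C : Matrix (Fin m) N ℝ) (lam : ℂ) :
    Matrix (N ⊕ Fin m) (N ⊕ Fin m) ℂ :=
  Matrix.fromBlocks (A.map Complex.ofReal - lam • 1) (B.map Complex.ofReal)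
    (C.map Complex.ofReal) 0

/-- A system `(A,B,C)` is minimum phase if the Rosenbrock matrix has full rank for every `λ`
with nonnegative real part. -/
def MinimumPhase {N : Type*} [Fintype N] [DecidableEq N] {m : ℕ}
    (A : Matrix N N ℝ) (B : Matrix N (Fin m) ℝ) (C : Matrix (Fin m) N ℝ) : Prop :=
  ∀ lam : ℂ, 0 ≤ lam.re → (Rosenbrock A B C lam).rank = Fintype.card N + m

/-- A system `(A,B,C)` has strict relative degree `r`: the Markov parameters `C A^k B` vanish for
`k = 0,…,r−2` and `C A^{r−1} B` is invertible. -/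
def StrictRelDeg {N : Type*} [Fintype N] [DecidableEq N] {m : ℕ}
    (A : Matrix N N ℝ) (B : Matrix N (Fin m) ℝ) (C : Matrix (Fin m) N ℝ) (r : ℕ) : Prop :=
  (∀ k, k < r - 1 → C * A ^ k * B = 0) ∧ IsUnit (C * A ^ (r - 1) * B)

/-- Positive definiteness of a (not necessarily symmetric) square matrix:
`xᵀ Γ x > 0` for all `x ≠ 0`. -/
def PosDefQuad {m : ℕ} (G : Matrix (Fin m) (Fin m) ℝ) : Prop :=
  ∀ v : Fin m → ℝ, v ≠ 0 → 0 < v ⬝ᵥ G.mulVec v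

/-- The class `Σ_{m,r}`: strict relative degree `r`, minimum phase, and positive definite
high-frequency gain `Γ = C A^{r-1} B`. -/
def SigmaClass {N : Type*} [Fintype N] [DecidableEq N] {m : ℕ}
    (A : Matrix N N ℝ) (B : Matrix N (Fin m) ℝ) (C : Matrix (Fin m) N ℝ) (r : ℕ) : Prop :=
  StrictRelDeg A B C r ∧ MinimumPhase A B C ∧ PosDefQuad (C * A ^ (r - 1) * B)

/-- A real polynomial is Hurwitz if all its complex roots have negative real part. -/
def HurwitzPoly (q : Polynomial ℝ) : Prop :=
  ∀ z : ℂ, Polynomial.aeval z q = 0 → z.re < 0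

/-- The pair `(Â, b̂)` is controllable: the controllability matrix has full rank. -/
def Controllable {p : ℕ} (Ah : Matrix (Fin p) (Fin p) ℝ) (bh : Fin p → ℝ) : Prop :=
  (Matrix.of fun i j : Fin p => ((Ah ^ (j : ℕ)) *ᵥ bh) i).rank = p

/-- The pair `(ĉ, Â)` is observable: `(Âᵀ, ĉᵀ)` is controllable. -/
def Observable {p : ℕ} (ch : Fin p → ℝ) (Ah : Matrix (Fin p) (Fin p) ℝ) : Prop :=
  Controllable Ah.transpose ch

/-- The block-diagonal internal-model matrices built from a SISO realization `(Â, b̂, ĉ, 1)`. -/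
def IMA {p : ℕ} (m : ℕ) (Ah : Matrix (Fin p) (Fin p) ℝ) :
    Matrix (Fin p × Fin m) (Fin p × Fin m) ℝ :=
  Matrix.of fun i j => if i.2 = j.2 then Ah i.1 j.1 else 0

def IMB {p : ℕ} (m : ℕ) (bh : Fin p → ℝ) : Matrix (Fin p × Fin m) (Fin m) ℝ :=
  Matrix.of fun i l => if i.2 = l then bh i.1 else 0

def IMC {p : ℕ} (m : ℕ) (ch : Fin p → ℝ) : Matrix (Fin m) (Fin p × Fin m) ℝ :=
  Matrix.of fun l j => if l = j.2 then ch j.1 else 0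


namespace SigmaHelpers

variable {R : Type*} [CommRing R] {m p : ℕ}

def vecBlock (m : ℕ) {p : ℕ} (v : Fin p → R) : Matrix (Fin p × Fin m) (Fin m) R :=
  Matrix.of fun i l => if i.2 = l then v i.1 else 0

def covecBlock (m : ℕ) {p : ℕ} (c : Fin p → R) : Matrix (Fin m) (Fin p × Fin m) R :=
  Matrix.of fun l j => if l = j.2 then c j.1 else 0

lemma covec_mul_vec (c v : Fin p → R) :
    covecBlock m c * vecBlock m v = (c ⬝ᵥ v) • 1 := by
  ext l l'
  simp only [mul_apply, covecBlock, vecBlock, of_apply, Fintype.sum_prod_type, Matrix.smul_apply,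
    one_apply, smul_eq_mul, dotProduct]
  rw [Finset.sum_comm]
  simp only [ite_mul, zero_mul, mul_ite, mul_zero]
  by_cases h : l = l'
  · subst h
    simp
  · rw [Finset.sum_eq_zero, if_neg h]
    intro y _
    by_cases hy : l = y
    · subst hy; simp [Ne.symm, h]
    · simp [hy]

lemma blockDiag_mul_vec (M : Matrix (Fin p) (Fin p) R) (v : Fin p → R) :
    blockDiagonal (fun _ : Fin m => M) * vecBlock m v = vecBlock m (M *ᵥ v) := by
  ext i l
  simp only [mul_apply, blockDiagonal, vecBlock, of_apply, Fintype.sum_prod_type, mulVec,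
    dotProduct]
  by_cases h : i.2 = l
  · simp [h]
  · rw [if_neg h, Finset.sum_eq_zero]
    intro x _
    rw [Finset.sum_eq_zero]
    intro y _
    by_cases hy : i.2 = y <;> by_cases hl : y = l <;> simp_all

lemma smul_mul_vecBlock (a : R) (v : Fin p → R) :
    (a • (1 : Matrix (Fin p × Fin m) (Fin p × Fin m) R)) * vecBlock m v
      = vecBlock m (a • v) := by
  rw [Matrix.smul_mul, Matrix.one_mul]
  ext i l
  by_cases h : i.2 = l <;> simp [vecBlock, h]

lemma vecBlock_sub (u v : Fin p → R) :
    vecBlock m (u - v) = vecBlock m u - vecBlock m v := by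
  ext i l
  by_cases h : i.2 = l <;> simp [vecBlock, h]

lemma vecBlock_neg (v : Fin p → R) : vecBlock m (-v) = -vecBlock m v := by
  ext i l
  by_cases h : i.2 = l <;> simp [vecBlock, h]

lemma fromRows_add {m₁ m₂ nn : Type*} (A₁ : Matrix m₁ nn R) (A₂ : Matrix m₂ nn R)
    (B₁ : Matrix m₁ nn R) (B₂ : Matrix m₂ nn R) :
    fromRows A₁ A₂ + fromRows B₁ B₂ = fromRows (A₁ + B₁) (A₂ + B₂) := by
  ext i j
  cases i <;> simp

def sumShuffle (N M Q : Type*) : (N ⊕ M) ⊕ Q ≃ (N ⊕ Q) ⊕ M where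
  toFun x := match x with
    | .inl (.inl n) => .inl (.inl n)
    | .inl (.inr m) => .inr m
    | .inr q => .inl (.inr q)
  invFun x := match x with
    | .inl (.inl n) => .inl (.inl n)
    | .inl (.inr q) => .inr q
    | .inr m => .inl (.inr m)
  left_inv := by rintro ((n | m) | q) <;> rfl
  right_inv := by rintro ((n | q) | m) <;> rfl

lemma det_shuffle {N Q M : Type*} [Fintype N] [DecidableEq N] [Fintype Q] [DecidableEq Q]
    [Fintype M] [DecidableEq M]
    (a : Matrix N N R) (b : Matrix N Q R) (e : Matrix N M R) (d : Matrix Q Q R)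
    (g : Matrix M N R) :
    (fromBlocks (fromBlocks a b 0 d) (fromRows e 0) (fromCols g 0) 0).det
      = (fromBlocks a e g 0).det * d.det := by
  rw [← Matrix.det_submatrix_equiv_self (sumShuffle N M Q)]
  have hsub : (fromBlocks (fromBlocks a b 0 d) (fromRows e 0) (fromCols g 0) 0).submatrix
      (sumShuffle N M Q) (sumShuffle N M Q)
      = fromBlocks (fromBlocks a e g 0) (fromRows b 0) 0 d := by
    ext i j
    rcases i with (x | y) | z <;> rcases j with (u | v) | w <;>
      simp [sumShuffle, Matrix.fromBlocks,
        Matrix.submatrix_apply]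
  rw [hsub, Matrix.det_fromBlocks_zero₂₁]

lemma map_IMA (Ah : Matrix (Fin p) (Fin p) ℝ) :
    (IMA m Ah).map Complex.ofReal = blockDiagonal (fun _ : Fin m => Ah.map Complex.ofReal) := by
  ext ⟨i1, i2⟩ ⟨j1, j2⟩
  by_cases h : i2 = j2 <;> simp [IMA, blockDiagonal, h]

lemma map_IMB (bh : Fin p → ℝ) :
    (IMB m bh).map Complex.ofReal = vecBlock m (fun i => (bh i : ℂ)) := by
  ext ⟨i1, i2⟩ l
  by_cases h : i2 = l <;> simp [IMB, vecBlock, h]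

lemma map_IMC (ch : Fin p → ℝ) :
    (IMC m ch).map Complex.ofReal = covecBlock m (fun i => (ch i : ℂ)) := by
  ext l ⟨j1, j2⟩
  by_cases h : l = j2 <;> simp [IMC, covecBlock, h]

lemma map_fromRows {N : Type*} (B : Matrix N (Fin m) ℝ) (Bt : Matrix (Fin p × Fin m) (Fin m) ℝ) :
    (fromRows B Bt).map Complex.ofReal
      = fromRows (B.map Complex.ofReal) (Bt.map Complex.ofReal) := by
  ext i j
  cases i <;> simp

lemma map_fromColumns {N : Type*} (C : Matrix (Fin m) N ℝ) (Ct : Matrix (Fin m) (Fin p × Fin m) ℝ) :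
    (fromCols C Ct).map Complex.ofReal
      = fromCols (C.map Complex.ofReal) (Ct.map Complex.ofReal) := by
  ext i j
  cases j <;> simp

lemma map_mul_ofReal {a b c : Type*} [Fintype b] (M : Matrix a b ℝ) (N : Matrix b c ℝ) :
    (M * N).map Complex.ofReal = M.map Complex.ofReal * N.map Complex.ofReal := by
  ext i j
  simp [Matrix.mul_apply, Matrix.map_apply]

lemma fromBlocks_sub_smul_one {N Q : Type*} [Fintype N] [DecidableEq N] [Fintype Q]
    [DecidableEq Q] (a : Matrix N N ℂ) (b : Matrix N Q ℂ) (d : Matrix Q Q ℂ) (lam : ℂ) :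
    fromBlocks a b 0 d - lam • 1 = fromBlocks (a - lam • 1) b 0 (d - lam • 1) := by
  ext i j
  rcases i with i | i <;> rcases j with j | j <;>
    simp [Matrix.fromBlocks, Matrix.sub_apply, Matrix.smul_apply, Matrix.one_apply]

lemma blockDiagonal_sub_smul_one (Ahc : Matrix (Fin p) (Fin p) ℂ) (lam : ℂ) :
    (blockDiagonal fun _ : Fin m => Ahc) - lam • 1
      = blockDiagonal fun _ : Fin m => Ahc - lam • 1 := by
  ext ⟨i1, i2⟩ ⟨j1, j2⟩
  by_cases h : i2 = j2 <;>
    simp [Matrix.blockDiagonal, Matrix.sub_apply, Matrix.smul_apply, Matrix.one_apply,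
      Prod.ext_iff, h]

lemma markov_aux {N Q : Type*} [Fintype N] [DecidableEq N] [Fintype Q] [DecidableEq Q]
    (A : Matrix N N R) (B : Matrix N (Fin m) R) (C : Matrix (Fin m) N R)
    (At : Matrix Q Q R) (Ct : Matrix (Fin m) Q R)
    (k : ℕ) (h : ∀ j, j < k → C * A ^ j * B = 0) :
    fromCols C (0 : Matrix (Fin m) Q R) * (fromBlocks A (B * Ct) 0 At) ^ k
      = fromCols (C * A ^ k) (0 : Matrix (Fin m) Q R) := by
  induction k with
  | zero => simp
  | succ k ih =>
    have ih' := ih (fun j hj => h j (Nat.lt_succ_of_lt hj))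
    rw [pow_succ, ← Matrix.mul_assoc, ih', fromCols_mul_fromBlocks]
    have hk : C * A ^ k * B = 0 := h k (Nat.lt_succ_self k)
    rw [← Matrix.mul_assoc (C * A ^ k) B Ct, hk]
    simp [pow_succ, Matrix.mul_assoc]

lemma rank_eq_card_iff_det {K : Type*} [Field K] {ι : Type*} [Fintype ι] [DecidableEq ι]
    (M : Matrix ι ι K) : M.rank = Fintype.card ι ↔ M.det ≠ 0 := by
  constructor
  · intro h
    have hr : Module.finrank K (LinearMap.range M.mulVecLin) = Module.finrank K (ι → K) := by
      rw [Module.finrank_fintype_fun_eq_card]; exact h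
    have htop : LinearMap.range M.mulVecLin = ⊤ := Submodule.eq_top_of_finrank_eq hr
    have hsurj : Function.Surjective M.mulVec := by
      have := LinearMap.range_eq_top.mp htop
      exact this
    exact ((Matrix.isUnit_iff_isUnit_det M).mp
      (Matrix.mulVec_surjective_iff_isUnit.mp hsurj)).ne_zero
  · intro h
    exact Matrix.rank_of_isUnit M ((Matrix.isUnit_iff_isUnit_det M).mpr (isUnit_iff_ne_zero.mpr h))

lemma charmatrix_map_eval {ι : Type*} [Fintype ι] [DecidableEq ι]
    (M : Matrix ι ι ℂ) (lam : ℂ) :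
    (charmatrix M).map (Polynomial.evalRingHom lam) = lam • 1 - M := by
  ext i j
  by_cases h : i = j
  · subst h; simp [charmatrix_apply, Matrix.smul_apply, Matrix.one_apply]
  · simp [charmatrix_apply, Matrix.diagonal_apply_ne _ h, Matrix.smul_apply,
      Matrix.one_apply_ne h, Matrix.sub_apply]

lemma eval_charpoly' {ι : Type*} [Fintype ι] [DecidableEq ι]
    (M : Matrix ι ι ℂ) (lam : ℂ) :
    M.charpoly.eval lam = (lam • 1 - M).det := by
  have := RingHom.map_det (Polynomial.evalRingHom lam) (charmatrix M)
  rw [Matrix.charpoly]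
  calc (charmatrix M).det.eval lam = (Polynomial.evalRingHom lam) (charmatrix M).det := rfl
    _ = ((Polynomial.evalRingHom lam).mapMatrix (charmatrix M)).det := this
    _ = (lam • 1 - M).det := by rw [RingHom.mapMatrix_apply, charmatrix_map_eval]

def RosPoly {N : Type*} [Fintype N] [DecidableEq N] {m : ℕ}
    (A : Matrix N N ℝ) (B : Matrix N (Fin m) ℝ) (C : Matrix (Fin m) N ℝ) :
    Matrix (N ⊕ Fin m) (N ⊕ Fin m) (Polynomial ℂ) :=
  Matrix.fromBlocks
    (A.map (fun a => Polynomial.C (a : ℂ))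
      - (Polynomial.X : Polynomial ℂ) • (1 : Matrix N N (Polynomial ℂ)))
    (B.map fun a => Polynomial.C (a : ℂ)) (C.map fun a => Polynomial.C (a : ℂ)) 0

lemma RosPoly_map_eval {N : Type*} [Fintype N] [DecidableEq N] {m : ℕ}
    (A : Matrix N N ℝ) (B : Matrix N (Fin m) ℝ) (C : Matrix (Fin m) N ℝ) (lam : ℂ) :
    (RosPoly A B C).map (Polynomial.evalRingHom lam) = Rosenbrock A B C lam := by
  ext i j
  rcases i with i | i <;> rcases j with j | j
  · by_cases h : i = j <;>
      simp [RosPoly, Rosenbrock, Matrix.fromBlocks, Matrix.one_apply, h, smul_eq_mul]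
  · simp [RosPoly, Rosenbrock, Matrix.fromBlocks]
  · simp [RosPoly, Rosenbrock, Matrix.fromBlocks]
  · simp [RosPoly, Rosenbrock, Matrix.fromBlocks]

lemma eval_det_RosPoly {N : Type*} [Fintype N] [DecidableEq N] {m : ℕ}
    (A : Matrix N N ℝ) (B : Matrix N (Fin m) ℝ) (C : Matrix (Fin m) N ℝ) (lam : ℂ) :
    Polynomial.eval lam (RosPoly A B C).det = (Rosenbrock A B C lam).det := by
  have := RingHom.map_det (Polynomial.evalRingHom lam) (RosPoly A B C)
  rw [RingHom.mapMatrix_apply, RosPoly_map_eval] at this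
  exact this

end SigmaHelpers

open SigmaHelpers

lemma charpoly_eq_alpha {p : ℕ} (α β : Polynomial ℝ)
    (hαmonic : α.Monic) (hαdeg : α.natDegree = p)
    (hβmonic : β.Monic) (hβdeg : β.natDegree = p)
    (hcoprime : IsCoprime α β)
    (Ah : Matrix (Fin p) (Fin p) ℝ) (bh ch : Fin p → ℝ)
    (htransfer : ∀ lam : ℂ, (lam • (1 : Matrix (Fin p) (Fin p) ℂ) - Ah.map Complex.ofReal).det ≠ 0 →
      (fun i => (ch i : ℂ)) ⬝ᵥ
          ((lam • (1 : Matrix (Fin p) (Fin p) ℂ) - Ah.map Complex.ofReal)⁻¹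
            *ᵥ fun i => (bh i : ℂ)) + 1
        = Polynomial.aeval lam β / Polynomial.aeval lam α) :
    (Ah.map Complex.ofReal).charpoly = α.map (algebraMap ℝ ℂ) := by
  set Ahc := Ah.map Complex.ofReal with hAhc
  set D := Ahc.charpoly with hD
  set αc := α.map (algebraMap ℝ ℂ) with hαc
  set βc := β.map (algebraMap ℝ ℂ) with hβc
  have hαcmonic : αc.Monic := hαmonic.map _
  have hβcmonic : βc.Monic := hβmonic.map _
  have hDmonic : D.Monic := Ahc.charpoly_monic
  have hαcne : αc ≠ 0 := hαcmonic.ne_zero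
  have hDne : D ≠ 0 := hDmonic.ne_zero
  -- the numerator polynomial
  set Nx : Polynomial ℂ :=
    (fun i => Polynomial.C ((ch i : ℂ))) ⬝ᵥ
      ((charmatrix Ahc).adjugate *ᵥ fun i => Polynomial.C ((bh i : ℂ))) + D with hNx
  have key : Nx * αc = βc * D := by
    apply Polynomial.eq_of_infinite_eval_eq
    apply Set.Infinite.mono (s := {lam : ℂ | αc.eval lam ≠ 0 ∧ D.eval lam ≠ 0})
    swap
    · have : {lam : ℂ | αc.eval lam ≠ 0 ∧ D.eval lam ≠ 0} =
          ({lam : ℂ | αc.IsRoot lam} ∪ {lam : ℂ | D.IsRoot lam})ᶜ := by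
        ext lam; simp [Polynomial.IsRoot, not_or]
      rw [this]
      exact Set.Finite.infinite_compl
        ((Polynomial.finite_setOf_isRoot hαcne).union (Polynomial.finite_setOf_isRoot hDne))
    · rintro lam ⟨hα0, hD0⟩
      set E : Matrix (Fin p) (Fin p) ℂ := lam • 1 - Ahc with hE
      have hdetE : E.det ≠ 0 := by rw [hE, ← eval_charpoly']; exact hD0
      have htr' := htransfer lam hdetE
      set w : ℂ := (fun i => (ch i : ℂ)) ⬝ᵥ (E.adjugate *ᵥ fun i => (bh i : ℂ)) with hw
      -- rewrite inverse via adjugate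
      have hinv : E⁻¹ = (E.det)⁻¹ • E.adjugate := by
        rw [Matrix.inv_def, Ring.inverse_eq_inv]
      rw [hinv, Matrix.smul_mulVec, dotProduct_smul] at htr'
      -- so htr' : E.det⁻¹ • w + 1 = aeval β / aeval α
      -- evaluate Nx
      have hevaldot : eval lam ((fun i => Polynomial.C ((ch i : ℂ))) ⬝ᵥ
          ((charmatrix Ahc).adjugate *ᵥ fun i => Polynomial.C ((bh i : ℂ)))) = w := by
        have h1 := RingHom.map_dotProduct (Polynomial.evalRingHom lam)
          (fun i => Polynomial.C ((ch i : ℂ)))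
          ((charmatrix Ahc).adjugate *ᵥ fun i => Polynomial.C ((bh i : ℂ)))
        have h1' : eval lam ((fun i => Polynomial.C ((ch i : ℂ))) ⬝ᵥ
            ((charmatrix Ahc).adjugate *ᵥ fun i => Polynomial.C ((bh i : ℂ))))
          = (⇑(Polynomial.evalRingHom lam) ∘ fun i => Polynomial.C ((ch i : ℂ))) ⬝ᵥ
            ⇑(Polynomial.evalRingHom lam) ∘ ((charmatrix Ahc).adjugate *ᵥ fun i => Polynomial.C ((bh i : ℂ))) := h1
        rw [h1']
        congr 1
        · ext i; simp
        · ext i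
          have h2 := RingHom.map_mulVec (Polynomial.evalRingHom lam)
            (charmatrix Ahc).adjugate (fun i => Polynomial.C ((bh i : ℂ))) i
          have h2' : (⇑(Polynomial.evalRingHom lam) ∘ ((charmatrix Ahc).adjugate *ᵥ fun i => Polynomial.C ((bh i : ℂ)))) i
            = (((charmatrix Ahc).adjugate.map (Polynomial.evalRingHom lam)) *ᵥ (⇑(Polynomial.evalRingHom lam) ∘ fun i => Polynomial.C ((bh i : ℂ)))) i := h2
          rw [h2']
          have h3 : (charmatrix Ahc).adjugate.map (Polynomial.evalRingHom lam) = E.adjugate := by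
            have := RingHom.map_adjugate (Polynomial.evalRingHom lam) (charmatrix Ahc)
            rw [RingHom.mapMatrix_apply, RingHom.mapMatrix_apply, charmatrix_map_eval] at this
            exact this
          rw [h3]
          congr 1
          ext j; simp
      have haev : (aeval lam) α = eval lam (α.map (algebraMap ℝ ℂ)) := by
        rw [aeval_def, eval_map]
      have hbev : (aeval lam) β = eval lam (β.map (algebraMap ℝ ℂ)) := by
        rw [aeval_def, eval_map]
      show eval lam (Nx * αc) = eval lam (βc * D)
      rw [hNx, hαc, hβc, hD]
      rw [eval_mul, eval_mul, eval_add, hevaldot, eval_charpoly', ← hE, ← haev, ← hbev]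
      have hsmul : (E.det)⁻¹ • w = (E.det)⁻¹ * w := rfl
      rw [hsmul] at htr'
      have ha : (aeval lam) α ≠ 0 := by rwa [haev]
      field_simp [ha] at htr'
      linear_combination htr'
  -- divisibility
  have hdvd : αc ∣ D := hcoprime.map (Polynomial.mapRingHom (algebraMap ℝ ℂ))
    |>.dvd_of_dvd_mul_left ⟨Nx, by rw [show (Polynomial.mapRingHom (algebraMap ℝ ℂ)) β = βc from rfl,
      show (Polynomial.mapRingHom (algebraMap ℝ ℂ)) α = αc from rfl, ← key, mul_comm]⟩
  obtain ⟨q, hq⟩ := hdvd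
  have hqmonic : q.Monic := by
    have := hDmonic
    rw [hq] at this
    have hlc := this.leadingCoeff
    rw [Polynomial.leadingCoeff_mul] at hlc
    rw [Polynomial.Monic, ← hlc, hαcmonic.leadingCoeff, one_mul]
  have hqdeg : q.natDegree = 0 := by
    have hdeg : D.natDegree = αc.natDegree + q.natDegree := by
      rw [hq, Polynomial.natDegree_mul hαcne hqmonic.ne_zero]
    have h1 : D.natDegree = p := by
      rw [hD, Matrix.charpoly_natDegree_eq_dim, Fintype.card_fin]
    have h2 : αc.natDegree = p := by rw [hαc, hαmonic.natDegree_map, hαdeg]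
    omega
  have : q = 1 := hqmonic.natDegree_eq_zero.mp hqdeg
  rw [hq, this, mul_one]


lemma det_interconnection {N : Type*} [Fintype N] [DecidableEq N] {m p : ℕ}
    (A : Matrix N N ℝ) (B : Matrix N (Fin m) ℝ) (C : Matrix (Fin m) N ℝ)
    (Ah : Matrix (Fin p) (Fin p) ℝ) (bh ch : Fin p → ℝ) (lam : ℂ) (g : ℂ)
    (hdetE : (lam • (1 : Matrix (Fin p) (Fin p) ℂ) - Ah.map Complex.ofReal).det ≠ 0)
    (hg : (fun i => (ch i : ℂ)) ⬝ᵥ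
        ((lam • (1 : Matrix (Fin p) (Fin p) ℂ) - Ah.map Complex.ofReal)⁻¹
          *ᵥ fun i => (bh i : ℂ)) + 1 = g) :
    (Rosenbrock (fromBlocks A (B * IMC m ch) 0 (IMA m Ah)) (fromRows B (IMB m bh))
        (fromCols C 0) lam).det
      = (Rosenbrock A B C lam).det * g ^ m
          * ((Ah.map Complex.ofReal - lam • 1).det) ^ m := by
  set Ac := A.map Complex.ofReal
  set Bc := B.map Complex.ofReal
  set Cc := C.map Complex.ofReal
  set Ahc := Ah.map Complex.ofReal with hAhc
  set bhc : Fin p → ℂ := fun i => (bh i : ℂ) with hbhc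
  set chc : Fin p → ℂ := fun i => (ch i : ℂ) with hchc
  set E : Matrix (Fin p) (Fin p) ℂ := lam • 1 - Ahc with hE
  set k : Fin p → ℂ := E⁻¹ *ᵥ bhc with hk
  set s : ℂ := chc ⬝ᵥ k with hs
  have hsg : s + 1 = g := hg
  have hEk : E *ᵥ k = bhc := by
    rw [hk, Matrix.mulVec_mulVec, Matrix.mul_nonsing_inv _ (isUnit_iff_ne_zero.mpr hdetE),
      Matrix.one_mulVec]
  have hAk : Ahc *ᵥ k - lam • k = -bhc := by
    have : (lam • 1 - Ahc) *ᵥ k = lam • k - Ahc *ᵥ k := by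
      rw [Matrix.sub_mulVec, Matrix.smul_mulVec, Matrix.one_mulVec]
    rw [← hE] at this
    rw [← hEk, this]
    abel
  -- block structure of the Rosenbrock matrix of the interconnection
  set Atc := blockDiagonal (fun _ : Fin m => Ahc) with hAtc
  set Btc := vecBlock m bhc with hBtc
  set Ctc := covecBlock m chc with hCtc
  set M11 : Matrix (N ⊕ Fin p × Fin m) (N ⊕ Fin p × Fin m) ℂ :=
    fromBlocks (Ac - lam • 1) (Bc * Ctc) 0 (Atc - lam • 1) with hM11
  have hT : Rosenbrock (fromBlocks A (B * IMC m ch) 0 (IMA m Ah)) (fromRows B (IMB m bh))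
      (fromCols C 0) lam
      = fromBlocks M11 (fromRows Bc Btc) (fromCols Cc 0) 0 := by
    have hA11 : (fromBlocks A (B * IMC m ch) 0 (IMA m Ah)).map Complex.ofReal - lam • 1
        = M11 := by
      rw [fromBlocks_map, map_mul_ofReal, map_IMC, map_IMA,
        Matrix.map_zero _ Complex.ofReal_zero, fromBlocks_sub_smul_one, hM11]
    have hB1 : (fromRows B (IMB m bh)).map Complex.ofReal = fromRows Bc Btc := by
      rw [map_fromRows, map_IMB]
    have hC1 : (fromCols C (0 : Matrix (Fin m) (Fin p × Fin m) ℝ)).map Complex.ofReal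
        = fromCols Cc 0 := by
      rw [map_fromColumns, Matrix.map_zero _ Complex.ofReal_zero]
    rw [Rosenbrock, hA11, hB1, hC1]
  set V : Matrix ((N ⊕ Fin p × Fin m) ⊕ Fin m) ((N ⊕ Fin p × Fin m) ⊕ Fin m) ℂ :=
    fromBlocks 1 (fromRows (0 : Matrix N (Fin m) ℂ) (vecBlock m k)) 0 1 with hV
  have hdetV : V.det = 1 := by
    rw [hV, Matrix.det_fromBlocks_zero₂₁, Matrix.det_one, Matrix.det_one, mul_one]
  have hTV : fromBlocks M11 (fromRows Bc Btc) (fromCols Cc 0) 0 * V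
      = fromBlocks M11 (fromRows ((s+1) • Bc) 0) (fromCols Cc 0) 0 := by
    have h1 : (Bc * Ctc) * vecBlock m k = s • Bc := by
      rw [Matrix.mul_assoc, hCtc, covec_mul_vec, ← hs, Matrix.mul_smul, Matrix.mul_one]
    have h2 : (Atc - lam • 1) * vecBlock m k = -Btc := by
      rw [Matrix.sub_mul, hAtc, blockDiag_mul_vec, smul_mul_vecBlock, ← vecBlock_sub,
        hAk, vecBlock_neg, hBtc]
    have e2 : M11 * fromRows (0 : Matrix N (Fin m) ℂ) (vecBlock m k) + fromRows Bc Btc * (1 : Matrix (Fin m) (Fin m) ℂ)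
        = fromRows ((s + 1) • Bc) 0 := by
      rw [Matrix.mul_one, hM11, fromBlocks_mul_fromRows, Matrix.mul_zero, zero_add,
        Matrix.zero_mul, zero_add, h1, h2, fromRows_add, add_smul, one_smul, neg_add_cancel]
    have e4 : fromCols Cc (0 : Matrix (Fin m) (Fin p × Fin m) ℂ) * fromRows (0 : Matrix N (Fin m) ℂ) (vecBlock m k)
        + (0 : Matrix (Fin m) (Fin m) ℂ) * 1 = 0 := by
      rw [fromCols_mul_fromRows, Matrix.mul_zero, Matrix.zero_mul, add_zero,
        Matrix.zero_mul, add_zero]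
    rw [hV, fromBlocks_multiply, Matrix.mul_one, Matrix.mul_zero, add_zero, e2,
      Matrix.mul_one, Matrix.zero_mul, add_zero, e4]
  have hdet1 : (Rosenbrock (fromBlocks A (B * IMC m ch) 0 (IMA m Ah)) (fromRows B (IMB m bh))
      (fromCols C 0) lam).det
      = (fromBlocks (Ac - lam • 1) ((s+1) • Bc) Cc 0).det * (Atc - lam • 1).det := by
    have hdm : (fromBlocks M11 (fromRows Bc Btc) (fromCols Cc 0) 0).det
        = ((fromBlocks M11 (fromRows Bc Btc) (fromCols Cc 0) 0) * V).det := by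
      rw [Matrix.det_mul, hdetV, mul_one]
    rw [hT, hdm, hTV, hM11]
    exact det_shuffle _ _ _ _ _
  have hdet2 : (fromBlocks (Ac - lam • 1) ((s+1) • Bc) Cc 0).det
      = (Rosenbrock A B C lam).det * (s+1) ^ m := by
    have hmul : Rosenbrock A B C lam * fromBlocks 1 0 0 ((s+1) • (1 : Matrix (Fin m) (Fin m) ℂ))
        = fromBlocks (Ac - lam • 1) ((s+1) • Bc) Cc 0 := by
      rw [Rosenbrock, fromBlocks_multiply]
      simp only [Matrix.mul_one, Matrix.mul_zero, Matrix.zero_mul, add_zero, zero_add,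
        Matrix.mul_smul, smul_zero]
      rfl
    rw [← hmul, Matrix.det_mul, Matrix.det_fromBlocks_zero₂₁, Matrix.det_one, one_mul,
      Matrix.det_smul, Matrix.det_one, mul_one, Fintype.card_fin]
  have hdet3 : (Atc - lam • 1).det = ((Ahc - lam • 1).det) ^ m := by
    rw [hAtc, blockDiagonal_sub_smul_one, Matrix.det_blockDiagonal, Finset.prod_const,
      Finset.card_univ, Fintype.card_fin]
  rw [hdet1, hdet2, hdet3, hsg]


/-- **The series interconnection with an internal model stays in the class `Σ_{m,r}`**
(Lemma on properties of the interconnection). -/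
theorem stmt_4 (n m p r : ℕ)
    (A : Matrix (Fin n) (Fin n) ℝ) (B : Matrix (Fin n) (Fin m) ℝ) (C : Matrix (Fin m) (Fin n) ℝ)
    (hSigma : SigmaClass A B C r)
    (α β : Polynomial ℝ)
    (hαmonic : α.Monic) (hαdeg : α.natDegree = p)
    (hαroots : ∀ lam : ℂ, Polynomial.aeval lam α = 0 → (Rosenbrock A B C lam).rank = n + m)
    (hβmonic : β.Monic) (hβdeg : β.natDegree = p)
    (hβHurwitz : HurwitzPoly β) (hcoprime : IsCoprime α β)
    (Ah : Matrix (Fin p) (Fin p) ℝ) (bh ch : Fin p → ℝ)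
    (hctrb : Controllable Ah bh) (hobsv : Observable ch Ah)
    (htransfer : ∀ lam : ℂ, (lam • (1 : Matrix (Fin p) (Fin p) ℂ) - Ah.map Complex.ofReal).det ≠ 0 →
      (fun i => (ch i : ℂ)) ⬝ᵥ
          ((lam • (1 : Matrix (Fin p) (Fin p) ℂ) - Ah.map Complex.ofReal)⁻¹
            *ᵥ fun i => (bh i : ℂ)) + 1
        = Polynomial.aeval lam β / Polynomial.aeval lam α)
    (Aic : Matrix (Fin n ⊕ Fin p × Fin m) (Fin n ⊕ Fin p × Fin m) ℝ)
    (Bic : Matrix (Fin n ⊕ Fin p × Fin m) (Fin m) ℝ)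
    (Cic : Matrix (Fin m) (Fin n ⊕ Fin p × Fin m) ℝ)
    (hAic : Aic = Matrix.fromBlocks A (B * IMC m ch) 0 (IMA m Ah))
    (hBic : Bic = Matrix.fromRows B (IMB m bh))
    (hCic : Cic = Matrix.fromCols C 0) :
    SigmaClass Aic Bic Cic r ∧ Cic * Aic ^ (r - 1) * Bic = C * A ^ (r - 1) * B := by
  subst hAic hBic hCic
  obtain ⟨⟨hmark, hunit⟩, hmp, hpos⟩ := hSigma
  have hCA : ∀ k, (∀ j, j < k → C * A ^ j * B = 0) →
      fromCols C (0 : Matrix (Fin m) (Fin p × Fin m) ℝ) * (fromBlocks A (B * IMC m ch) 0 (IMA m Ah)) ^ k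
        = fromCols (C * A ^ k) (0 : Matrix (Fin m) (Fin p × Fin m) ℝ) := fun k hk => markov_aux A B C _ _ k hk
  have hGamma : fromCols C (0 : Matrix (Fin m) (Fin p × Fin m) ℝ) * (fromBlocks A (B * IMC m ch) 0 (IMA m Ah)) ^ (r - 1)
      * fromRows B (IMB m bh) = C * A ^ (r - 1) * B := by
    rw [hCA (r - 1) (fun j hj => hmark j hj), fromCols_mul_fromRows, Matrix.zero_mul,
      add_zero]
  refine ⟨⟨⟨?_, ?_⟩, ?_, ?_⟩, hGamma⟩
  · intro k hk
    rw [hCA k (fun j hj => hmark j (hj.trans hk)), fromCols_mul_fromRows, Matrix.zero_mul,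
      add_zero]
    exact hmark k hk
  · rw [hGamma]; exact hunit
  · -- minimum phase
    have hcharp : (Ah.map Complex.ofReal).charpoly = α.map (algebraMap ℝ ℂ) :=
      charpoly_eq_alpha α β hαmonic hαdeg hβmonic hβdeg hcoprime Ah bh ch htransfer
    set αc := α.map (algebraMap ℝ ℂ) with hαc
    set βc := β.map (algebraMap ℝ ℂ) with hβc
    have hαcne : αc ≠ 0 := (hαmonic.map _).ne_zero
    have haev : ∀ lam : ℂ, aeval lam α = eval lam αc := fun lam => by
      rw [aeval_def, hαc, eval_map]
    have hbev : ∀ lam : ℂ, aeval lam β = eval lam βc := fun lam => by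
      rw [aeval_def, hβc, eval_map]
    have hglob : (RosPoly (fromBlocks A (B * IMC m ch) 0 (IMA m Ah)) (fromRows B (IMB m bh))
        (fromCols C 0)).det
        = Polynomial.C ((-1 : ℂ) ^ (p * m)) * βc ^ m * (RosPoly A B C).det := by
      apply Polynomial.eq_of_infinite_eval_eq
      apply Set.Infinite.mono (s := {lam : ℂ | eval lam αc ≠ 0})
      swap
      · have hset : {lam : ℂ | eval lam αc ≠ 0} = {lam : ℂ | αc.IsRoot lam}ᶜ := by
          ext lam; simp [Polynomial.IsRoot]
        rw [hset]
        exact Set.Finite.infinite_compl (Polynomial.finite_setOf_isRoot hαcne)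
      · intro lam hlam
        simp only [Set.mem_setOf_eq] at hlam ⊢
        have h1 : (lam • (1 : Matrix (Fin p) (Fin p) ℂ) - Ah.map Complex.ofReal).det
            = eval lam αc := by
          rw [← eval_charpoly', hcharp]
        have hdetE : (lam • (1 : Matrix (Fin p) (Fin p) ℂ) - Ah.map Complex.ofReal).det ≠ 0 := by
          rw [h1]; exact hlam
        have hdi := det_interconnection A B C Ah bh ch lam (aeval lam β / aeval lam α) hdetE
          (htransfer lam hdetE)
        rw [eval_det_RosPoly, hdi, eval_mul, eval_mul, eval_C, eval_pow, eval_det_RosPoly]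
        have h2 : (Ah.map Complex.ofReal - lam • 1).det = (-1 : ℂ) ^ p * eval lam αc := by
          rw [← neg_sub, Matrix.det_neg, Fintype.card_fin, h1]
        rw [h2, haev lam, hbev lam]
        have h3 : eval lam αc ≠ 0 := hlam
        rw [mul_assoc, ← mul_pow, show eval lam βc / eval lam αc * ((-1) ^ p * eval lam αc)
            = eval lam βc * (-1) ^ p by field_simp, mul_pow, ← pow_mul]
        ring
    intro lam hre
    have hb : aeval lam β ≠ 0 := fun h => absurd (hβHurwitz lam h) (not_lt.mpr hre)
    have hR : (Rosenbrock A B C lam).det ≠ 0 := by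
      rw [← rank_eq_card_iff_det]
      have := hmp lam hre
      simp only [Fintype.card_sum, Fintype.card_fin]
      simpa using this
    have hdet : (Rosenbrock (fromBlocks A (B * IMC m ch) 0 (IMA m Ah)) (fromRows B (IMB m bh))
        (fromCols C 0) lam).det
        = (-1 : ℂ) ^ (p * m) * (eval lam βc) ^ m * (Rosenbrock A B C lam).det := by
      rw [← eval_det_RosPoly, hglob, eval_mul, eval_mul, eval_C, eval_pow, eval_det_RosPoly]
    have hne : (Rosenbrock (fromBlocks A (B * IMC m ch) 0 (IMA m Ah)) (fromRows B (IMB m bh))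
        (fromCols C 0) lam).det ≠ 0 := by
      rw [hdet]
      refine mul_ne_zero (mul_ne_zero (pow_ne_zero _ (by norm_num)) (pow_ne_zero _ ?_)) hR
      rw [← hbev lam]; exact hb
    have hrank := (rank_eq_card_iff_det _).mpr hne
    rw [hrank]
    simp [Fintype.card_sum]
  · rw [hGamma]; exact hpos
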